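/- Let u : Ω → ℝ be a C^2 plurisubharmonic function on an open set Ω ⊆ ℂ^n and suppose that for all x ∈ Ω and all sufficiently small h ∈ ℝ^{2n} one has u(x+h) + u(x−h) ≤ 2u(x) + C|h|². Then u ∈ C^{1,1} with |∇u(x) − ∇u(y)| ≤ (2n−1)C|x−y| for x, y in any convex subset of Ω. -/

import Mathlib

/-- The real Hessian of `u` on `Ω` at `x`, as a bilinear expression. -/
noncomputable def realHessWithin {E : Type*} [NormedAddCommGroup E] [NormedSpace ℝ E]
    (u : E → ℝ) (Ω : Set E) (x v w : E) : ℝ :=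
  iteratedFDerivWithin ℝ 2 u Ω x ![v, w]

open scoped Topology

set_option maxHeartbeats 1000000

/-- Let `u` be a `C²` plurisubharmonic function on an open `Ω ⊆ ℂⁿ ≅ ℝ²ⁿ` (with complex
structure `J`, plurisubharmonicity expressed as `D²u(v,v) + D²u(Jv,Jv) ≥ 0`) whose second
differences satisfy `u(x+h) + u(x-h) ≤ 2u(x) + C|h|²` for small `h`. Then on every convex
subset of `Ω` the gradient of `u` is Lipschitz: `|∇u(x) - ∇u(y)| ≤ (2n-1)C|x-y|`. -/
theorem c11_of_psh_and_second_difference {n : ℕ}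
    (Ω : Set (EuclideanSpace ℝ (Fin (2 * n)))) (hΩ : IsOpen Ω)
    (u : EuclideanSpace ℝ (Fin (2 * n)) → ℝ) (hu : ContDiffOn ℝ 2 u Ω)
    (J : EuclideanSpace ℝ (Fin (2 * n)) →ₗ[ℝ] EuclideanSpace ℝ (Fin (2 * n)))
    (hJsq : ∀ v, J (J v) = -v) (hJiso : ∀ v, ‖J v‖ = ‖v‖)
    (hpsh : ∀ x ∈ Ω, ∀ v,
      0 ≤ realHessWithin u Ω x v v + realHessWithin u Ω x (J v) (J v))
    (C : ℝ) (hC : 0 ≤ C)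
    (hsd : ∀ x ∈ Ω, ∃ δ > 0, ∀ h : EuclideanSpace ℝ (Fin (2 * n)), ‖h‖ < δ →
      x + h ∈ Ω ∧ x - h ∈ Ω ∧ u (x + h) + u (x - h) ≤ 2 * u x + C * ‖h‖ ^ 2) :
    ∀ s ⊆ Ω, Convex ℝ s → ∀ x ∈ s, ∀ y ∈ s,
      ‖gradient u x - gradient u y‖ ≤ (2 * (n : ℝ) - 1) * C * ‖x - y‖ := by
  intro s hsΩ hconv x hx y hy
  set f' : EuclideanSpace ℝ (Fin (2 * n)) → (EuclideanSpace ℝ (Fin (2 * n)) →L[ℝ] ℝ) := fderiv ℝ u with hf'def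
  set f'' : EuclideanSpace ℝ (Fin (2 * n)) → (EuclideanSpace ℝ (Fin (2 * n)) →L[ℝ] (EuclideanSpace ℝ (Fin (2 * n)) →L[ℝ] ℝ)) := fun z => fderiv ℝ f' z with hf''def
  have hCD : ∀ z ∈ Ω, ContDiffAt ℝ 2 u z := fun z hz => hu.contDiffAt (hΩ.mem_nhds hz)
  have hdiff : ∀ z ∈ Ω, HasFDerivAt u (f' z) z := fun z hz =>
    ((hCD z hz).differentiableAt (by norm_num)).hasFDerivAt
  have hf'CD : ContDiffOn ℝ 1 f' Ω := hu.fderiv_of_isOpen hΩ (by norm_num)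
  have hdiff' : ∀ z ∈ Ω, HasFDerivAt f' (f'' z) z := fun z hz =>
    ((hf'CD.contDiffAt (hΩ.mem_nhds hz)).differentiableAt one_ne_zero).hasFDerivAt
  have hcont'' : ContinuousOn f'' Ω := hf'CD.continuousOn_fderiv_of_isOpen hΩ le_rfl
  -- identify realHessWithin with the second derivative
  have hHess : ∀ z ∈ Ω, ∀ v w, realHessWithin u Ω z v w = f'' z v w := by
    intro z hz v w
    have h1 : iteratedFDerivWithin ℝ 2 u Ω z = iteratedFDeriv ℝ 2 u z :=
      iteratedFDerivWithin_of_isOpen 2 hΩ hz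
    rw [realHessWithin, h1, iteratedFDeriv_two_apply]
    simp [hf''def, hf'def]
  -- key upper bound on the Hessian quadratic form
  have key : ∀ z ∈ Ω, ∀ v, f'' z v v ≤ C * ‖v‖ ^ 2 := by
    intro z hz v
    by_contra hK
    push_neg at hK
    have hv : v ≠ 0 := by
      rintro rfl
      simp at hK
    have hvn : 0 < ‖v‖ := norm_pos_iff.2 hv
    set ℓ : ℝ → EuclideanSpace ℝ (Fin (2 * n)) := fun t => z + t • v with hℓdef
    have hℓ0 : ℓ 0 = z := by simp [hℓdef]
    have hℓd : ∀ t : ℝ, HasDerivAt ℓ v t := by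
      intro t
      simpa [hℓdef] using ((hasDerivAt_id t).smul_const v).const_add z
    obtain ⟨δ, hδ, hδsd⟩ := hsd z hz
    obtain ⟨ε, hε, hεΩ⟩ := Metric.isOpen_iff.1 hΩ z hz
    have hmem : ∀ t : ℝ, |t| * ‖v‖ < ε → ℓ t ∈ Ω := by
      intro t ht
      apply hεΩ
      have : dist (ℓ t) z = |t| * ‖v‖ := by
        simp [hℓdef, dist_eq_norm, norm_smul, Real.norm_eq_abs]
      rwa [Metric.mem_ball, this]
    set c : ℝ := (f'' z v v + C * ‖v‖ ^ 2) / 2 with hcdef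
    have hc1 : C * ‖v‖ ^ 2 < c := by rw [hcdef]; linarith
    have hc2 : c < f'' z v v := by rw [hcdef]; linarith
    -- continuity of t ↦ f''(ℓ t) v v at 0
    have hQcont : ContinuousAt (fun t => f'' (ℓ t) v v) 0 := by
      have h1 : ContinuousAt f'' (ℓ 0) := by
        rw [hℓ0]; exact hcont''.continuousAt (hΩ.mem_nhds hz)
      have h2 : ContinuousAt ℓ 0 :=
        (continuous_const.add (continuous_id.smul continuous_const)).continuousAt
      have h3 : ContinuousAt (fun t => f'' (ℓ t)) 0 := h1.comp h2
      have h4 : Continuous (fun A : EuclideanSpace ℝ (Fin (2 * n)) →L[ℝ]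
          (EuclideanSpace ℝ (Fin (2 * n)) →L[ℝ] ℝ) => A v v) :=
        (ContinuousLinearMap.apply ℝ ℝ v).continuous.comp
          (ContinuousLinearMap.apply ℝ (EuclideanSpace ℝ (Fin (2 * n)) →L[ℝ] ℝ) v).continuous
      exact h4.continuousAt.comp h3
    have hQ0 : c < f'' (ℓ 0) v v := by rw [hℓ0]; exact hc2
    have hev : ∀ᶠ t in 𝓝 (0:ℝ), c < f'' (ℓ t) v v :=
      continuousAt_const.eventually_lt hQcont hQ0
    obtain ⟨ε₂, hε₂, hball⟩ := Metric.eventually_nhds_iff.1 hev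
    -- choose a small radius r
    obtain ⟨r, hr, hrε₂, hrεδ⟩ : ∃ r > 0, r < ε₂ ∧ r * ‖v‖ < min ε δ := by
      refine ⟨min (ε₂ / 2) (min ε δ / (2 * ‖v‖)), ?_, ?_, ?_⟩
      · have : 0 < min ε δ := lt_min hε hδ
        positivity
      · calc min (ε₂ / 2) (min ε δ / (2 * ‖v‖)) ≤ ε₂ / 2 := min_le_left _ _
          _ < ε₂ := by linarith
      · have h1 : min (ε₂ / 2) (min ε δ / (2 * ‖v‖)) ≤ min ε δ / (2 * ‖v‖) :=
          min_le_right _ _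
        have h2 : 0 < min ε δ := lt_min hε hδ
        calc min (ε₂ / 2) (min ε δ / (2 * ‖v‖)) * ‖v‖
            ≤ (min ε δ / (2 * ‖v‖)) * ‖v‖ := by
              exact mul_le_mul_of_nonneg_right h1 (norm_nonneg v)
          _ = min ε δ / 2 := by field_simp
          _ < min ε δ := by linarith
    have hmemD : ∀ t ∈ Set.Ioo (-r) r, ℓ t ∈ Ω := by
      intro t ht
      apply hmem
      have habs : |t| < r := abs_lt.2 ⟨ht.1, ht.2⟩
      calc |t| * ‖v‖ < r * ‖v‖ := by exact mul_lt_mul_of_pos_right habs hvn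
        _ < min ε δ := hrεδ
        _ ≤ ε := min_le_left _ _
    -- the perturbed function w
    set w : ℝ → ℝ := fun t => u (ℓ t) - c / 2 * t ^ 2 with hwdef
    have hg' : ∀ t ∈ Set.Ioo (-r) r, HasDerivAt (fun t => u (ℓ t)) (f' (ℓ t) v) t := by
      intro t ht
      exact (hdiff _ (hmemD t ht)).comp_hasDerivAt t (hℓd t)
    have hw' : ∀ t ∈ Set.Ioo (-r) r, HasDerivAt w (f' (ℓ t) v - c * t) t := by
      intro t ht
      have h2 : HasDerivAt (fun t : ℝ => c / 2 * t ^ 2) (c * t) t := by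
        have := (hasDerivAt_pow 2 t).const_mul (c / 2)
        convert this using 1
        · rfl
        · rfl
        · ring
      exact (hg' t ht).sub h2
    have hderivw : Set.EqOn (deriv w) (fun t => f' (ℓ t) v - c * t) (Set.Ioo (-r) r) :=
      fun t ht => (hw' t ht).deriv
    have hd2 : ∀ t ∈ Set.Ioo (-r) r, deriv^[2] w t = f'' (ℓ t) v v - c := by
      intro t ht
      have heq : deriv w =ᶠ[𝓝 t] (fun t => f' (ℓ t) v - c * t) :=
        Filter.eventuallyEq_of_mem (isOpen_Ioo.mem_nhds ht) hderivw
      have hder : HasDerivAt (fun t => f' (ℓ t) v - c * t) (f'' (ℓ t) v v - c) t := by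
        have c1 : HasDerivAt (fun t => f' (ℓ t)) (f'' (ℓ t) v) t :=
          (hdiff' _ (hmemD t ht)).comp_hasDerivAt t (hℓd t)
        have c2 : HasDerivAt (fun t => f' (ℓ t) v) (f'' (ℓ t) v v) t := by
          have := c1.clm_apply (hasDerivAt_const t v)
          simpa using this
        have c3 : HasDerivAt (fun t : ℝ => c * t) c t := by
          simpa using (hasDerivAt_id t).const_mul c
        exact c2.sub c3
      have : deriv^[2] w t = deriv (deriv w) t := rfl
      rw [this, heq.deriv_eq, hder.deriv]
    have hpos : ∀ t ∈ interior (Set.Ioo (-r) r), 0 < deriv^[2] w t := by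
      intro t ht
      rw [interior_Ioo] at ht
      rw [hd2 t ht]
      have habs : |t| < r := abs_lt.2 ⟨ht.1, ht.2⟩
      have : dist t 0 < ε₂ := by
        rw [Real.dist_eq, sub_zero]; exact habs.trans hrε₂
      have := hball this
      linarith
    have hwc : ContinuousOn w (Set.Ioo (-r) r) :=
      fun t ht => (hw' t ht).continuousAt.continuousWithinAt
    have hsc : StrictConvexOn ℝ (Set.Ioo (-r) r) w :=
      strictConvexOn_of_deriv2_pos (convex_Ioo _ _) hwc hpos
    -- apply strict convexity at ±r/2
    set t₀ : ℝ := r / 2 with ht₀def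
    have ht₀pos : 0 < t₀ := by positivity
    have hmem₁ : t₀ ∈ Set.Ioo (-r) r := by constructor <;> [linarith; linarith]
    have hmem₂ : -t₀ ∈ Set.Ioo (-r) r := by constructor <;> [linarith; linarith]
    have hne : -t₀ ≠ t₀ := by intro h; linarith [h]
    have hmid := hsc.2 hmem₂ hmem₁ hne (by norm_num : (0:ℝ) < 1/2)
      (by norm_num : (0:ℝ) < 1/2) (by norm_num)
    have hmid' : w 0 < (w (-t₀) + w t₀) / 2 := by
      have e1 : (1/2 : ℝ) • (-t₀) + (1/2 : ℝ) • t₀ = 0 := by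
        rw [smul_eq_mul, smul_eq_mul]; ring
      rw [e1] at hmid
      have e2 : (1/2 : ℝ) • w (-t₀) + (1/2 : ℝ) • w t₀ = (w (-t₀) + w t₀) / 2 := by
        rw [smul_eq_mul, smul_eq_mul]; ring
      rw [e2] at hmid
      exact hmid
    -- unfold w and use the second-difference hypothesis
    have hnorm : ‖t₀ • v‖ = t₀ * ‖v‖ := by
      rw [norm_smul, Real.norm_eq_abs, abs_of_pos ht₀pos]
    have hnormlt : ‖t₀ • v‖ < δ := by
      rw [hnorm]
      calc t₀ * ‖v‖ < r * ‖v‖ := by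
            exact mul_lt_mul_of_pos_right (by rw [ht₀def]; linarith) hvn
        _ < min ε δ := hrεδ
        _ ≤ δ := min_le_right _ _
    obtain ⟨-, -, hsd'⟩ := hδsd (t₀ • v) hnormlt
    have hℓt₀ : ℓ t₀ = z + t₀ • v := rfl
    have hℓmt₀ : ℓ (-t₀) = z - t₀ • v := by
      simp [hℓdef, neg_smul, sub_eq_add_neg]
    have hw0 : w 0 = u z := by simp [hwdef, hℓ0]
    have hwt : w t₀ = u (z + t₀ • v) - c / 2 * t₀ ^ 2 := by
      rw [hwdef]
    have hwmt : w (-t₀) = u (z - t₀ • v) - c / 2 * t₀ ^ 2 := by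
      simp only [hwdef]
      rw [hℓmt₀]
      ring_nf
    rw [hw0, hwt, hwmt] at hmid'
    rw [hnorm, mul_pow] at hsd'
    have ht₀sq : 0 < t₀ ^ 2 := by positivity
    nlinarith [hsd', hmid', hc1, ht₀sq]
  -- two-sided bound and operator norm bound
  have hbound : ∀ z ∈ Ω, ‖f'' z‖ ≤ C := by
    intro z hz
    have hsymm : ∀ v w, f'' z v w = f'' z w v := (hCD z hz).isSymmSndFDerivAt (by norm_num)
    have hlow : ∀ v, -(C * ‖v‖ ^ 2) ≤ f'' z v v := by
      intro v
      have h0 := hpsh z hz v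
      rw [hHess z hz, hHess z hz] at h0
      have h2 := key z hz (J v)
      rw [hJiso] at h2
      linarith
    have habs : ∀ v w, |f'' z v w| ≤ C / 2 * (‖v‖ ^ 2 + ‖w‖ ^ 2) := by
      intro v w
      have e : f'' z v w = (f'' z (v + w) (v + w) - f'' z (v - w) (v - w)) / 4 := by
        have h1 := hsymm v w
        simp only [map_add, map_sub, ContinuousLinearMap.add_apply,
          ContinuousLinearMap.sub_apply]
        linarith
      have hp : ‖v + w‖ ^ 2 + ‖v - w‖ ^ 2 = 2 * (‖v‖ ^ 2 + ‖w‖ ^ 2) := by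
        simp only [sq]
        simpa only [sq] using parallelogram_law_with_norm ℝ v w
      have k1 := key z hz (v + w)
      have k2 := key z hz (v - w)
      have l1 := hlow (v + w)
      have l2 := hlow (v - w)
      have hp' : C * ‖v + w‖ ^ 2 + C * ‖v - w‖ ^ 2
          = 4 * (C / 2 * (‖v‖ ^ 2 + ‖w‖ ^ 2)) := by
        calc C * ‖v + w‖ ^ 2 + C * ‖v - w‖ ^ 2
            = C * (‖v + w‖ ^ 2 + ‖v - w‖ ^ 2) := by ring
          _ = C * (2 * (‖v‖ ^ 2 + ‖w‖ ^ 2)) := by rw [hp]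
          _ = 4 * (C / 2 * (‖v‖ ^ 2 + ‖w‖ ^ 2)) := by ring
      rw [e, abs_le]
      constructor <;> linarith
    have hvw : ∀ v w, |f'' z v w| ≤ C * ‖v‖ * ‖w‖ := by
      intro v w
      rcases eq_or_ne v 0 with rfl | hv
      · simp
      rcases eq_or_ne w 0 with rfl | hw
      · simp
      have hvn : 0 < ‖v‖ := norm_pos_iff.2 hv
      have hwn : 0 < ‖w‖ := norm_pos_iff.2 hw
      set t : ℝ := Real.sqrt (‖w‖ / ‖v‖) with htdef
      have htpos : 0 < t := Real.sqrt_pos.2 (by positivity)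
      have ht2 : t ^ 2 = ‖w‖ / ‖v‖ := Real.sq_sqrt (by positivity)
      have e : f'' z v w = f'' z (t • v) (t⁻¹ • w) := by
        simp only [map_smul, ContinuousLinearMap.smul_apply, smul_eq_mul]
        rw [← mul_assoc, inv_mul_cancel₀ htpos.ne', one_mul]
      have hb := habs (t • v) (t⁻¹ • w)
      rw [← e] at hb
      have h1 : ‖t • v‖ ^ 2 = ‖w‖ * ‖v‖ := by
        rw [norm_smul, Real.norm_eq_abs, mul_pow, sq_abs, ht2]
        field_simp
      have h2 : ‖t⁻¹ • w‖ ^ 2 = ‖v‖ * ‖w‖ := by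
        rw [norm_smul, Real.norm_eq_abs, mul_pow, sq_abs, inv_pow, ht2]
        field_simp
      rw [h1, h2] at hb
      calc |f'' z v w| ≤ C / 2 * (‖w‖ * ‖v‖ + ‖v‖ * ‖w‖) := hb
        _ = C * ‖v‖ * ‖w‖ := by ring
    refine ContinuousLinearMap.opNorm_le_bound _ hC fun v => ?_
    refine ContinuousLinearMap.opNorm_le_bound _ (by positivity) fun w => ?_
    rw [Real.norm_eq_abs]
    calc |f'' z v w| ≤ C * ‖v‖ * ‖w‖ := hvw v w
      _ = C * ‖v‖ * ‖w‖ := rfl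
  -- mean value inequality on the convex set
  have hlip : ‖f' x - f' y‖ ≤ C * ‖x - y‖ := by
    have := hconv.norm_image_sub_le_of_norm_hasFDerivWithin_le
      (fun z hz => (hdiff' z (hsΩ hz)).hasFDerivWithinAt)
      (fun z hz => hbound z (hsΩ hz)) hy hx
    simpa using this
  have hg : ‖gradient u x - gradient u y‖ = ‖f' x - f' y‖ := by
    have h0 : gradient u x - gradient u y
        = (InnerProductSpace.toDual ℝ (EuclideanSpace ℝ (Fin (2 * n)))).symm (f' x - f' y) :=
      (map_sub _ _ _).symm
    rw [h0, LinearIsometryEquiv.norm_map]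
  rw [hg]
  rcases Nat.eq_zero_or_pos n with hn | hn
  · subst hn
    have hxy : x = y := PiLp.ext fun i => Fin.elim0 i
    simp [hxy]
  · have h1 : (1 : ℝ) ≤ (n : ℝ) := by exact_mod_cast hn
    have h4 : 0 ≤ (2 * (n : ℝ) - 2) * (C * ‖x - y‖) :=
      mul_nonneg (by linarith only [h1]) (mul_nonneg hC (norm_nonneg _))
    have h2 : C * ‖x - y‖ ≤ (2 * (n : ℝ) - 1) * C * ‖x - y‖ := by
      linarith only [h4]
    exact hlip.trans h2
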